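/- arXiv:1301.0967 — 15 statements merged into one kernel-verified Lean document; each statement's English description precedes it below -/
import Mathlib

section
/- Let (u_i)_{i∈ℤ} be a real sequence such that the family (|u_{i+1} − u_i|)_{i∈ℤ} is summable, and let (C_i)_{i∈ℤ}, (D_i)_{i∈ℤ} be real sequences with C_i ≥ 0, D_i ≥ 0 and C_i + D_i ≤ 1 for all i ∈ ℤ. Define v_i = u_i − C_{i−1}(u_i − u_{i−1}) + D_i(u_{i+1} − u_i). Then the family (|v_{i+1} − v_i|)_{i∈ℤ} is summable and ∑_{i∈ℤ} |v_{i+1} − v_i| ≤ ∑_{i∈ℤ} |u_{i+1} − u_i| (Harten's TVD theorem, valid on any 1D grid since the definition of total variation is independent of cell sizes). -/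
set_option maxHeartbeats 800000


/-- Harten's TVD theorem on an arbitrary 1D grid: if `v i = u i - C (i-1) * (u i - u (i-1))
    + D i * (u (i+1) - u i)` with `C i ≥ 0`, `D i ≥ 0`, `C i + D i ≤ 1`, then the total
    variation of `v` is at most that of `u`. -/
theorem harten_tvd (u C D v : ℤ → ℝ)
    (hu : Summable (fun i : ℤ => |u (i + 1) - u i|))
    (hC : ∀ i : ℤ, 0 ≤ C i) (hD : ∀ i : ℤ, 0 ≤ D i)
    (hCD : ∀ i : ℤ, C i + D i ≤ 1)
    (hv : ∀ i : ℤ, v i = u i - C (i - 1) * (u i - u (i - 1)) + D i * (u (i + 1) - u i)) :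
    Summable (fun i : ℤ => |v (i + 1) - v i|) ∧
      (∑' i : ℤ, |v (i + 1) - v i|) ≤ ∑' i : ℤ, |u (i + 1) - u i| := by
  set a : ℤ → ℝ := fun i => |u (i + 1) - u i| with ha
  set f : ℤ → ℝ := fun i => (1 - C i - D i) * a i with hf
  set g : ℤ → ℝ := fun i => C i * a i with hg
  set h : ℤ → ℝ := fun i => D i * a i with hh
  have hf0 : ∀ i, 0 ≤ f i := fun i =>
    mul_nonneg (by have := hCD i; linarith) (abs_nonneg _)
  have hg0 : ∀ i, 0 ≤ g i := fun i => mul_nonneg (hC i) (abs_nonneg _)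
  have hh0 : ∀ i, 0 ≤ h i := fun i => mul_nonneg (hD i) (abs_nonneg _)
  have ha0 : ∀ i, 0 ≤ a i := fun i => abs_nonneg _
  have hfle : ∀ i, f i ≤ a i := fun i => by
    show (1 - C i - D i) * a i ≤ a i
    have := hC i; have := hD i; nlinarith [ha0 i]
  have hgle : ∀ i, g i ≤ a i := fun i => by
    show C i * a i ≤ a i
    have := hC i; have := hD i; have := hCD i; nlinarith [ha0 i]
  have hhle : ∀ i, h i ≤ a i := fun i => by
    show D i * a i ≤ a i
    have := hC i; have := hD i; have := hCD i; nlinarith [ha0 i]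
  have hfs : Summable f := Summable.of_nonneg_of_le hf0 hfle hu
  have hgs : Summable g := Summable.of_nonneg_of_le hg0 hgle hu
  have hhs : Summable h := Summable.of_nonneg_of_le hh0 hhle hu
  have hgs' : Summable (fun i : ℤ => g (i - 1)) :=
    (Equiv.subRight (1 : ℤ)).summable_iff.mpr hgs
  have hhs' : Summable (fun i : ℤ => h (i + 1)) :=
    (Equiv.addRight (1 : ℤ)).summable_iff.mpr hhs
  -- key identity and bound
  have key : ∀ i : ℤ, |v (i + 1) - v i| ≤ f i + g (i - 1) + h (i + 1) := by
    intro i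
    have h1 := hv (i + 1)
    have h2 := hv i
    simp only [add_sub_cancel_right] at h1
    have hid : v (i + 1) - v i =
        (1 - C i - D i) * (u (i + 1) - u i) + C (i - 1) * (u i - u (i - 1))
          + D (i + 1) * (u (i + 1 + 1) - u (i + 1)) := by
      rw [h1, h2]; ring
    rw [hid]
    calc |(1 - C i - D i) * (u (i + 1) - u i) + C (i - 1) * (u i - u (i - 1))
          + D (i + 1) * (u (i + 1 + 1) - u (i + 1))|
        ≤ |(1 - C i - D i) * (u (i + 1) - u i)| + |C (i - 1) * (u i - u (i - 1))|
          + |D (i + 1) * (u (i + 1 + 1) - u (i + 1))| := by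
          exact (abs_add_le _ _).trans (by gcongr; exact abs_add_le _ _)
      _ = f i + g (i - 1) + h (i + 1) := by
          simp only [hf, hg, hh, ha, abs_mul]
          rw [abs_of_nonneg (by have := hCD i; linarith),
            abs_of_nonneg (hC (i - 1)), abs_of_nonneg (hD (i + 1)),
            sub_add_cancel]
  have hbs : Summable (fun i : ℤ => f i + g (i - 1) + h (i + 1)) :=
    (hfs.add hgs').add hhs'
  have hvs : Summable (fun i : ℤ => |v (i + 1) - v i|) :=
    Summable.of_nonneg_of_le (fun i => abs_nonneg _) key hbs
  refine ⟨hvs, ?_⟩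
  have step1 : (∑' i : ℤ, |v (i + 1) - v i|) ≤ ∑' i : ℤ, (f i + g (i - 1) + h (i + 1)) :=
    Summable.tsum_le_tsum key hvs hbs
  have step2 : (∑' i : ℤ, (f i + g (i - 1) + h (i + 1)))
      = (∑' i, f i) + (∑' i, g i) + (∑' i, h i) := by
    rw [Summable.tsum_add (hfs.add hgs') hhs', Summable.tsum_add hfs hgs']
    congr 1
    · congr 1
      exact (Equiv.subRight (1 : ℤ)).tsum_eq g
    · exact (Equiv.addRight (1 : ℤ)).tsum_eq h
  have step3 : (∑' i, f i) + (∑' i, g i) + (∑' i, h i) = ∑' i, a i := by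
    rw [← Summable.tsum_add hfs hgs, ← Summable.tsum_add (hfs.add hgs) hhs]
    exact tsum_congr fun i => by simp only [hf, hg, hh]; ring
  calc (∑' i : ℤ, |v (i + 1) - v i|) ≤ _ := step1
    _ = ∑' i, a i := by rw [step2, step3]
end

section
/- For all real numbers λ, μ, a, b with 0 ≤ λ ≤ 1, 0 ≤ μ ≤ 1, 0 ≤ a ≤ 2 and 0 ≤ b ≤ 2, one has 0 ≤ λ + (1/2)·λ·(1−λ)·a − (1/2)·λ·(1−μ)·b ≤ 1. -/
/-- The Harten coefficient bound: for Courant numbers `λ, μ ∈ [0,1]` and limiter values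
    `a, b ∈ [0,2]`, one has `0 ≤ λ + (1/2)λ(1-λ)a - (1/2)λ(1-μ)b ≤ 1`. -/
theorem harten_coefficient_bound (lam mu a b : ℝ)
    (hlam0 : 0 ≤ lam) (hlam1 : lam ≤ 1) (hmu0 : 0 ≤ mu) (hmu1 : mu ≤ 1)
    (ha0 : 0 ≤ a) (ha2 : a ≤ 2) (hb0 : 0 ≤ b) (hb2 : b ≤ 2) :
    0 ≤ lam + (1 / 2) * lam * (1 - lam) * a - (1 / 2) * lam * (1 - mu) * b ∧
      lam + (1 / 2) * lam * (1 - lam) * a - (1 / 2) * lam * (1 - mu) * b ≤ 1 := by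
  constructor
  · nlinarith [mul_nonneg hlam0 (sub_nonneg.2 hb2), mul_nonneg (mul_nonneg hlam0 hmu0) hb0, mul_nonneg (mul_nonneg hlam0 (sub_nonneg.2 hlam1)) ha0]
  · nlinarith [mul_nonneg hlam0 hb0, mul_nonneg (mul_nonneg hlam0 hmu0) hb0, mul_nonneg (mul_nonneg hlam0 (sub_nonneg.2 hlam1)) (sub_nonneg.2 ha2), mul_nonneg hlam0 (sub_nonneg.2 hlam1), mul_nonneg (mul_nonneg hlam0 (sub_nonneg.2 hmu1)) hb0]
end

section
/- Let c > 0 and Δt > 0 be reals, let (Δx_i)_{i∈ℤ} be positive reals such that λ_i := c·Δt/Δx_i ≤ 1 for all i. Let (u_i)_{i∈ℤ} be a real sequence with (|u_{i+1} − u_i|)_{i∈ℤ} summable, and let (σ_i)_{i∈ℤ} be reals such that for every i there exist a_i, b_i ∈ [0, 2] with Δx_i·σ_i = a_i·(u_{i+1} − u_i) and Δx_i·σ_i = b_i·(u_i − u_{i−1}). Define v_i = u_i − λ_i(u_i − u_{i−1}) − (1/2)λ_i[(1−λ_i)·Δx_i·σ_i − (1−λ_{i−1})·Δx_{i−1}·σ_{i−1}].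 Then (|v_{i+1} − v_i|)_{i∈ℤ} is summable and ∑_{i∈ℤ} |v_{i+1} − v_i| ≤ ∑_{i∈ℤ} |u_{i+1} − u_i|; i.e., the MUSCL/REP update on the non-uniform grid is total-variation-diminishing. -/
/-- The MUSCL/REP update for `u_t + c u_x = 0` (`c > 0`) on a non-uniform grid,
    with limited slopes satisfying the TVD limiter conditions, is total-variation
    diminishing. -/
theorem muscl_rep_tvd (c dt : ℝ) (hc : 0 < c) (hdt : 0 < dt)
    (dx : ℤ → ℝ) (hdx : ∀ i : ℤ, 0 < dx i)
    (hcfl : ∀ i : ℤ, c * dt / dx i ≤ 1)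
    (u σ : ℤ → ℝ) (hu : Summable (fun i : ℤ => |u (i + 1) - u i|))
    (hσ : ∀ i : ℤ, ∃ a b : ℝ, 0 ≤ a ∧ a ≤ 2 ∧ 0 ≤ b ∧ b ≤ 2 ∧
      dx i * σ i = a * (u (i + 1) - u i) ∧ dx i * σ i = b * (u i - u (i - 1)))
    (v : ℤ → ℝ)
    (hv : ∀ i : ℤ, v i = u i - (c * dt / dx i) * (u i - u (i - 1)) -
      (1 / 2) * (c * dt / dx i) *
        ((1 - c * dt / dx i) * dx i * σ i -
         (1 - c * dt / dx (i - 1)) * dx (i - 1) * σ (i - 1))) :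
    Summable (fun i : ℤ => |v (i + 1) - v i|) ∧
      (∑' i : ℤ, |v (i + 1) - v i|) ≤ ∑' i : ℤ, |u (i + 1) - u i| := by
  choose a b ha0 ha2 hb0 hb2 hea heb using hσ
  have hlam0 : ∀ i : ℤ, 0 < c * dt / dx i := fun i => div_pos (mul_pos hc hdt) (hdx i)
  set C : ℤ → ℝ := fun i => (c * dt / dx i) *
      (1 + (1/2) * (1 - c * dt / dx i) * b i
         - (1/2) * (1 - c * dt / dx (i-1)) * a (i-1)) with hC
  have hC0 : ∀ i, 0 ≤ C i := by
    intro i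
    have h1 := hlam0 i; have h2 := hcfl i
    have h3 := hlam0 (i-1); have h4 := hcfl (i-1)
    have h5 := ha0 (i-1); have h6 := ha2 (i-1)
    have h7 := hb0 i; have h8 := hb2 i
    simp only [hC]
    nlinarith [mul_nonneg (le_of_lt h1) h7, mul_nonneg (le_of_lt h1) h5]
  have hC1 : ∀ i, C i ≤ 1 := by
    intro i
    have h1 := hlam0 i; have h2 := hcfl i
    have h3 := hlam0 (i-1); have h4 := hcfl (i-1)
    have h5 := ha0 (i-1); have h6 := ha2 (i-1)
    have h7 := hb0 i; have h8 := hb2 i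
    simp only [hC]
    nlinarith [mul_nonneg (le_of_lt h1) h5, sq_nonneg (1 - c * dt / dx i),
      mul_nonneg (le_of_lt h1) h7]
  have hvC : ∀ i : ℤ, v i = u i - C i * (u i - u (i-1)) := by
    intro i
    have e1 : dx i * σ i = b i * (u i - u (i-1)) := heb i
    have e2 : dx (i-1) * σ (i-1) = a (i-1) * (u i - u (i-1)) := by
      have h := hea (i-1); simpa using h
    rw [hv i]
    simp only [hC]
    linear_combination (-(1/2 * (c*dt/dx i) * (1 - c*dt/dx i))) * e1
      + (1/2 * (c*dt/dx i) * (1 - c*dt/dx (i-1))) * e2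
  have hdiff : ∀ i : ℤ, v (i+1) - v i
      = (1 - C (i+1)) * (u (i+1) - u i) + C i * (u i - u (i-1)) := by
    intro i
    rw [hvC i, hvC (i+1)]
    have h : (i + 1) - 1 = i := by ring
    rw [h]; ring
  set f : ℤ → ℝ := fun i => |u (i + 1) - u i| with hf
  have hf0 : ∀ i, 0 ≤ f i := fun i => abs_nonneg _
  have hbound : ∀ i, |v (i+1) - v i| ≤ (1 - C (i+1)) * f i + C i * f (i-1) := by
    intro i
    rw [hdiff i]
    calc |(1 - C (i+1)) * (u (i+1) - u i) + C i * (u i - u (i-1))|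
        ≤ |(1 - C (i+1)) * (u (i+1) - u i)| + |C i * (u i - u (i-1))| := abs_add_le _ _
      _ = (1 - C (i+1)) * f i + C i * f (i-1) := by
          rw [abs_mul, abs_mul, abs_of_nonneg (by linarith [hC1 (i+1)] : (0:ℝ) ≤ 1 - C (i+1)),
            abs_of_nonneg (hC0 i)]
          congr 1
          have h : (i:ℤ) - 1 + 1 = i := by ring
          simp only [hf, h]
  have hfs : Summable f := hu
  have hfshift : Summable (fun i : ℤ => f (i - 1)) := by
    have := (Equiv.subRight (1:ℤ)).summable_iff.mpr hfs
    simpa [Function.comp_def, add_sub_cancel_right] using this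
  have hs1 : Summable (fun i : ℤ => (1 - C (i+1)) * f i) :=
    Summable.of_nonneg_of_le
      (fun i => mul_nonneg (by linarith [hC1 (i+1)]) (hf0 i))
      (fun i => mul_le_of_le_one_left (hf0 i) (by linarith [hC0 (i+1)])) hfs
  have hs2 : Summable (fun i : ℤ => C i * f (i-1)) :=
    Summable.of_nonneg_of_le
      (fun i => mul_nonneg (hC0 i) (hf0 _))
      (fun i => mul_le_of_le_one_left (hf0 _) (hC1 i)) hfshift
  have hs2' : Summable (fun i : ℤ => C (i+1) * f i) := by
    have := (Equiv.addRight (1:ℤ)).summable_iff.mpr hs2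
    simpa [Function.comp_def, add_sub_cancel_right] using this
  have hsg : Summable (fun i : ℤ => (1 - C (i+1)) * f i + C i * f (i-1)) := hs1.add hs2
  have hsum : Summable (fun i : ℤ => |v (i + 1) - v i|) :=
    Summable.of_nonneg_of_le (fun i => abs_nonneg _) hbound hsg
  refine ⟨hsum, ?_⟩
  calc ∑' i : ℤ, |v (i + 1) - v i|
      ≤ ∑' i : ℤ, ((1 - C (i+1)) * f i + C i * f (i-1)) := Summable.tsum_le_tsum hbound hsum hsg
    _ = (∑' i : ℤ, (1 - C (i+1)) * f i) + ∑' i : ℤ, C i * f (i-1) := Summable.tsum_add hs1 hs2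
    _ = (∑' i : ℤ, (1 - C (i+1)) * f i) + ∑' i : ℤ, C (i+1) * f i := by
        congr 1
        rw [← (Equiv.addRight (1:ℤ)).tsum_eq (fun i : ℤ => C i * f (i-1))]
        simp [Function.comp_def, add_sub_cancel_right]
    _ = ∑' i : ℤ, ((1 - C (i+1)) * f i + C (i+1) * f i) := (Summable.tsum_add hs1 hs2').symm
    _ = ∑' i : ℤ, f i := by
        apply tsum_congr
        intro i; ring
end

section
/- Let x₀ < x₁ < x₂ be reals; set Δ₁ = x₁ − x₀, Δ₂ = x₂ − x₁, m₁ = (x₀ + x₁)/2, m₂ = (x₁ + x₂)/2. Let u₁, u₂, σ₁, σ₂ be reals and let f : ℝ → ℝ satisfy f(x) = u₁ + σ₁(x − m₁) for x ∈ [x₀, x₁) and f(x) = u₂ + σ₂(x − m₂) for x ∈ [x₁, x₂]. Let s be a real with 0 ≤ s ≤ min(Δ₁, Δ₂), and put λ = s/Δ₂, μ = s/Δ₁. Then (1/Δ₂)·∫_{x₁}^{x₂} f(x − s) dx = u₂ − λ(u₂ − u₁) − (1/2)·λ·[(1 − λ)·Δ₂·σ₂ − (1 − μ)·Δ₁·σ₁].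 -/
open intervalIntegral

lemma lin_int (a b c p q : ℝ) :
    ∫ x in p..q, (a + b * (x - c)) =
      (a * q + b / 2 * (q - c) ^ 2) - (a * p + b / 2 * (p - c) ^ 2) := by
  apply intervalIntegral.integral_eq_sub_of_hasDerivAt
    (f := fun x => a * x + b / 2 * (x - c) ^ 2)
  · intro x _
    have h : HasDerivAt (fun x => a * x + b / 2 * (x - c) ^ 2)
        (a * 1 + b / 2 * (2 * (x - c) ^ 1 * 1)) x := by
      have h1 : HasDerivAt (fun x : ℝ => a * x) (a * 1) x :=
        (hasDerivAt_id x).const_mul a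
      have h2 : HasDerivAt (fun x : ℝ => b / 2 * (x - c) ^ 2)
          (b / 2 * (2 * (x - c) ^ 1 * 1)) x := by
        have := ((hasDerivAt_id x).sub_const c).pow 2
        simpa using this.const_mul (b / 2)
      exact h1.add h2
    refine h.congr_deriv ?_
    ring
  · exact (Continuous.intervalIntegrable (by fun_prop) p q)

/-- The exact reconstruct–evolve–project (REP) formula: the new cell average over
    `[x₁, x₂]` of the shifted piecewise-linear reconstruction equals the MUSCL update. -/
theorem rep_exact_update (x₀ x₁ x₂ : ℝ) (h01 : x₀ < x₁) (h12 : x₁ < x₂)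
    (u₁ u₂ σ₁ σ₂ s : ℝ) (f : ℝ → ℝ)
    (hf₁ : ∀ x : ℝ, x₀ ≤ x → x < x₁ → f x = u₁ + σ₁ * (x - (x₀ + x₁) / 2))
    (hf₂ : ∀ x : ℝ, x₁ ≤ x → x ≤ x₂ → f x = u₂ + σ₂ * (x - (x₁ + x₂) / 2))
    (hs0 : 0 ≤ s) (hs : s ≤ min (x₁ - x₀) (x₂ - x₁)) :
    (1 / (x₂ - x₁)) * ∫ x in x₁..x₂, f (x - s) =
      u₂ - (s / (x₂ - x₁)) * (u₂ - u₁) -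
        (1 / 2) * (s / (x₂ - x₁)) *
          ((1 - s / (x₂ - x₁)) * (x₂ - x₁) * σ₂ -
           (1 - s / (x₁ - x₀)) * (x₁ - x₀) * σ₁) := by
  have hs1 : s ≤ x₁ - x₀ := le_trans hs (min_le_left _ _)
  have hs2 : s ≤ x₂ - x₁ := le_trans hs (min_le_right _ _)
  set y : ℝ := x₁ + s with hy
  have hy1 : x₁ ≤ y := by simp [hy, hs0]
  have hy2 : y ≤ x₂ := by simp only [hy]; linarith
  set g₁ : ℝ → ℝ := fun x => u₁ + σ₁ * (x - (s + (x₀ + x₁) / 2)) with hg₁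
  set g₂ : ℝ → ℝ := fun x => u₂ + σ₂ * (x - (s + (x₁ + x₂) / 2)) with hg₂
  -- a.e. equality on the first piece
  have hae : ∀ᵐ x : ℝ, x ≠ y := by
    have : (MeasureTheory.volume : MeasureTheory.Measure ℝ) {y} = 0 :=
      MeasureTheory.measure_singleton y
    rw [MeasureTheory.ae_iff]
    simp [Set.setOf_eq_eq_singleton, this]
  have key₁ : ∀ᵐ x : ℝ, x ∈ Set.uIoc x₁ y → f (x - s) = g₁ x := by
    filter_upwards [hae] with x hx hmem
    rw [Set.uIoc_of_le hy1] at hmem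
    have hxy : x < y := lt_of_le_of_ne hmem.2 hx
    have h1 : x₀ ≤ x - s := by linarith [hmem.1]
    have h2 : x - s < x₁ := by simp only [hy] at hxy; linarith
    rw [hf₁ _ h1 h2, hg₁]
    ring
  have key₂ : ∀ x ∈ Set.uIcc y x₂, f (x - s) = g₂ x := by
    intro x hmem
    rw [Set.uIcc_of_le hy2] at hmem
    have h1 : x₁ ≤ x - s := by simp only [hy] at hmem; linarith [hmem.1]
    have h2 : x - s ≤ x₂ := by linarith [hmem.2]
    rw [hf₂ _ h1 h2, hg₂]
    ring
  have hc₁ : Continuous g₁ := by fun_prop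
  have hc₂ : Continuous g₂ := by fun_prop
  have I₁ : IntervalIntegrable (fun x => f (x - s)) MeasureTheory.volume x₁ y := by
    refine (hc₁.intervalIntegrable x₁ y).congr_ae ?_
    have : (fun x => f (x - s)) =ᵐ[MeasureTheory.volume.restrict (Set.uIoc x₁ y)] g₁ :=
      (MeasureTheory.ae_restrict_iff' measurableSet_uIoc).mpr key₁
    exact this.symm
  have I₂ : IntervalIntegrable (fun x => f (x - s)) MeasureTheory.volume y x₂ := by
    refine (hc₂.intervalIntegrable y x₂).congr_ae ?_
    have : (fun x => f (x - s)) =ᵐ[MeasureTheory.volume.restrict (Set.uIoc y x₂)] g₂ :=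
      (MeasureTheory.ae_restrict_iff' measurableSet_uIoc).mpr
        (Filter.Eventually.of_forall fun x hmem => key₂ x (Set.uIoc_subset_uIcc hmem))
    exact this.symm
  have hsplit : (∫ x in x₁..x₂, f (x - s)) =
      (∫ x in x₁..y, f (x - s)) + ∫ x in y..x₂, f (x - s) :=
    (integral_add_adjacent_intervals I₁ I₂).symm
  have e₁ : (∫ x in x₁..y, f (x - s)) = ∫ x in x₁..y, g₁ x :=
    integral_congr_ae key₁
  have e₂ : (∫ x in y..x₂, f (x - s)) = ∫ x in y..x₂, g₂ x :=
    integral_congr key₂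
  have v₁ : (∫ x in x₁..y, g₁ x) =
      (u₁ * y + σ₁ / 2 * (y - (s + (x₀ + x₁) / 2)) ^ 2) -
        (u₁ * x₁ + σ₁ / 2 * (x₁ - (s + (x₀ + x₁) / 2)) ^ 2) :=
    lin_int u₁ σ₁ (s + (x₀ + x₁) / 2) x₁ y
  have v₂ : (∫ x in y..x₂, g₂ x) =
      (u₂ * x₂ + σ₂ / 2 * (x₂ - (s + (x₁ + x₂) / 2)) ^ 2) -
        (u₂ * y + σ₂ / 2 * (y - (s + (x₁ + x₂) / 2)) ^ 2) :=
    lin_int u₂ σ₂ (s + (x₁ + x₂) / 2) y x₂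
  rw [hsplit, e₁, e₂, v₁, v₂, hy]
  have hΔ₁ : x₁ - x₀ ≠ 0 := by linarith
  have hΔ₂ : x₂ - x₁ ≠ 0 := by linarith
  field_simp
  ring
end

section
/- Let A, B be reals with 0 < B < min(2, 2A), and define the enhanced minmod limiter φ(θ) = max(0, (B/A)·min(θ, A)). Then: (i) φ(A) = B; (ii) φ(θ) = 0 for all θ ≤ 0; (iii) 0 ≤ φ(θ) ≤ 2 for all θ; and (iv) φ(θ) ≤ 2θ for all θ > 0. -/
/-- The enhanced minmod limiter `φ(θ) = max(0, (B/A)·min(θ, A))` satisfies the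
    second-order condition `φ(A) = B` and the TVD conditions. -/
theorem enhanced_minmod_properties (A B : ℝ) (hB0 : 0 < B) (hB : B < min 2 (2 * A)) :
    (max 0 ((B / A) * min A A) = B) ∧
      (∀ θ : ℝ, θ ≤ 0 → max 0 ((B / A) * min θ A) = 0) ∧
      (∀ θ : ℝ, 0 ≤ max 0 ((B / A) * min θ A) ∧ max 0 ((B / A) * min θ A) ≤ 2) ∧
      (∀ θ : ℝ, 0 < θ → max 0 ((B / A) * min θ A) ≤ 2 * θ) := by
  have hA : 0 < A := by nlinarith [lt_of_lt_of_le hB (min_le_right _ _)]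
  have h2 : B < 2 := lt_of_lt_of_le hB (min_le_left _ _)
  have h2A : B < 2 * A := lt_of_lt_of_le hB (min_le_right _ _)
  have hBA : 0 < B / A := div_pos hB0 hA
  refine ⟨?_, ?_, ?_, ?_⟩
  · rw [min_self, div_mul_cancel₀ _ hA.ne']
    exact max_eq_right hB0.le
  · intro θ hθ
    have hmin : min θ A = θ := min_eq_left (hθ.trans hA.le)
    rw [hmin]
    exact max_eq_left (by nlinarith)
  · intro θ
    refine ⟨le_max_left _ _, ?_⟩
    have h1 : (B / A) * min θ A ≤ 2 := by
      have : min θ A ≤ A := min_le_right _ _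
      have := mul_le_mul_of_nonneg_left this hBA.le
      calc (B / A) * min θ A ≤ (B / A) * A := this
        _ = B := div_mul_cancel₀ _ hA.ne'
        _ ≤ 2 := h2.le
    exact max_le (by norm_num) h1
  · intro θ hθ
    have h1 : (B / A) * min θ A ≤ 2 * θ := by
      have hmin : min θ A ≤ θ := min_le_left _ _
      have hle : B / A ≤ 2 := by
        rw [div_le_iff₀ hA]; linarith
      rcases le_or_gt (min θ A) 0 with h | h
      · nlinarith
      · nlinarith [mul_le_mul hle hmin h.le (by norm_num : (0:ℝ) ≤ 2)]
    exact max_le (by positivity) h1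
end

section
/- Let A, B be reals with 0 < B < min(2, 2A), and define φ_{A,B}(θ) = max(0, (B/A)·min(θ, A)). Then for every real θ ≠ 0, φ_{A,B}(θ)/θ = φ_{1/A, B/A}(1/θ); i.e., the enhanced minmod limiter is symmetry-preserving. -/
/-- The enhanced minmod limiter `φ_{A,B}(θ) = max(0, (B/A)·min(θ, A))` is
    symmetry-preserving: `φ_{A,B}(θ)/θ = φ_{1/A, B/A}(1/θ)` for all `θ ≠ 0`. -/
theorem enhanced_minmod_symmetry (A B : ℝ) (hB0 : 0 < B) (hB : B < min 2 (2 * A)) :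
    ∀ θ : ℝ, θ ≠ 0 →
      (max 0 ((B / A) * min θ A)) / θ =
        max 0 (((B / A) / (1 / A)) * min (1 / θ) (1 / A)) := by
  have hA : 0 < A := by
    have := lt_of_lt_of_le hB (min_le_right _ _)
    linarith
  intro θ hθ
  have hBA : (B / A) / (1 / A) = B := by
    field_simp
  rw [hBA]
  rcases lt_or_gt_of_ne hθ with hneg | hpos
  · have h1 : min θ A = θ := min_eq_left (by linarith)
    have h2 : min (1 / θ) (1 / A) = 1 / θ :=
      min_eq_left (le_of_lt (lt_trans (one_div_neg.mpr hneg) (one_div_pos.mpr hA)))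
    rw [h1, h2]
    have l1 : (B / A) * θ ≤ 0 :=
      mul_nonpos_of_nonneg_of_nonpos (by positivity) (le_of_lt hneg)
    have l2 : B * (1 / θ) ≤ 0 :=
      mul_nonpos_of_nonneg_of_nonpos (le_of_lt hB0) (le_of_lt (one_div_neg.mpr hneg))
    rw [max_eq_left l1, max_eq_left l2, zero_div]
  · rcases le_total θ A with h | h
    · have h1 : min θ A = θ := min_eq_left h
      have h2 : min (1 / θ) (1 / A) = 1 / A :=
        min_eq_right (one_div_le_one_div_of_le hpos h)
      rw [h1, h2]
      have l1 : 0 ≤ (B / A) * θ := by positivity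
      have l2 : 0 ≤ B * (1 / A) := by positivity
      rw [max_eq_right l1, max_eq_right l2]
      field_simp
    · have h1 : min θ A = A := min_eq_right h
      have h2 : min (1 / θ) (1 / A) = 1 / θ :=
        min_eq_left (one_div_le_one_div_of_le hA h)
      rw [h1, h2]
      have l1 : 0 ≤ (B / A) * A := by positivity
      have l2 : 0 ≤ B * (1 / θ) := by positivity
      rw [max_eq_right l1, max_eq_right l2]
      field_simp
end

section
/- Let A, B be reals with 0 < B < min(2, 2A), and define the enhanced superbee limiter φ(θ) = max(0, min(2θ, B), min((B/A)·θ, 2)). Then: (i) φ(A) = B; (ii) φ(θ) = 0 for all θ ≤ 0; (iii) 0 ≤ φ(θ) ≤ 2 for all θ; and (iv) φ(θ) ≤ 2θ for all θ > 0. -/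
/-- The enhanced superbee limiter `φ(θ) = max(0, min(2θ, B), min((B/A)θ, 2))` satisfies
    the second-order condition `φ(A) = B` and the TVD conditions. -/
theorem enhanced_superbee_properties (A B : ℝ) (hB0 : 0 < B) (hB : B < min 2 (2 * A)) :
    (max 0 (max (min (2 * A) B) (min ((B / A) * A) 2)) = B) ∧
      (∀ θ : ℝ, θ ≤ 0 → max 0 (max (min (2 * θ) B) (min ((B / A) * θ) 2)) = 0) ∧
      (∀ θ : ℝ, 0 ≤ max 0 (max (min (2 * θ) B) (min ((B / A) * θ) 2)) ∧
        max 0 (max (min (2 * θ) B) (min ((B / A) * θ) 2)) ≤ 2) ∧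
      (∀ θ : ℝ, 0 < θ → max 0 (max (min (2 * θ) B) (min ((B / A) * θ) 2)) ≤ 2 * θ) := by
  have h2 : B < 2 := lt_of_lt_of_le hB (min_le_left _ _)
  have h2A : B < 2 * A := lt_of_lt_of_le hB (min_le_right _ _)
  have hA : 0 < A := by linarith
  have hBA : B / A * A = B := div_mul_cancel₀ B (ne_of_gt hA)
  have hBA2 : B / A < 2 := (div_lt_iff₀ hA).mpr (by linarith)
  refine ⟨?_, ?_, ?_, ?_⟩
  · rw [hBA, min_eq_left h2.le, min_eq_right h2A.le, max_self,
      max_eq_right hB0.le]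
  · intro θ hθ
    have h1 : 2 * θ ≤ 0 := by linarith
    have h3 : B / A * θ ≤ 0 := mul_nonpos_of_nonneg_of_nonpos (by positivity) hθ
    rw [min_eq_left (by linarith), min_eq_left (by linarith)]
    exact max_eq_left (max_le h1 h3)
  · intro θ
    refine ⟨le_max_left _ _, max_le (by norm_num) (max_le ?_ ?_)⟩
    · exact le_trans (min_le_right _ _) h2.le
    · exact min_le_right _ _
  · intro θ hθ
    refine max_le (by linarith) (max_le (min_le_left _ _) ?_)
    refine le_trans (min_le_left _ _) ?_
    nlinarith
end

section
/- Let A, B be reals with 0 < B < min(2, 2A), and define φ_{A,B}(θ) = max(0, min(2θ, B), min((B/A)·θ, 2)). Then for every real θ ≠ 0, φ_{A,B}(θ)/θ = φ_{1/A, B/A}(1/θ); i.e., the enhanced superbee limiter is symmetry-preserving. -/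
/-- The enhanced superbee limiter `φ_{A,B}(θ) = max(0, min(2θ, B), min((B/A)θ, 2))` is
    symmetry-preserving: `φ_{A,B}(θ)/θ = φ_{1/A, B/A}(1/θ)` for all `θ ≠ 0`. -/
theorem enhanced_superbee_symmetry (A B : ℝ) (hB0 : 0 < B) (hB : B < min 2 (2 * A)) :
    ∀ θ : ℝ, θ ≠ 0 →
      (max 0 (max (min (2 * θ) B) (min ((B / A) * θ) 2))) / θ =
        max 0 (max (min (2 * (1 / θ)) (B / A))
          (min (((B / A) / (1 / A)) * (1 / θ)) 2)) := by
  have hA : 0 < A := by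
    have := hB.trans_le (min_le_right _ _)
    linarith
  have hBA : 0 < B / A := div_pos hB0 hA
  have hcan : (B / A) / (1 / A) = B := by field_simp
  intro θ hθ
  rw [hcan]
  rcases lt_or_gt_of_ne hθ with hneg | hpos
  · -- both sides are 0
    have h1 : min (2 * θ) B ≤ 2 * θ := min_le_left _ _
    have h2 : min ((B / A) * θ) 2 ≤ (B / A) * θ := min_le_left _ _
    have hL : max 0 (max (min (2 * θ) B) (min ((B / A) * θ) 2)) = 0 := by
      have : (B / A) * θ < 0 := mul_neg_of_pos_of_neg hBA hneg
      rw [max_eq_left]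
      apply max_le <;> linarith
    have hs : 1 / θ < 0 := by
      have := one_div_neg.mpr hneg; exact this
    have hR : max 0 (max (min (2 * (1 / θ)) (B / A)) (min (B * (1 / θ)) 2)) = 0 := by
      have h3 : min (2 * (1 / θ)) (B / A) ≤ 2 * (1 / θ) := min_le_left _ _
      have h4 : min (B * (1 / θ)) 2 ≤ B * (1 / θ) := min_le_left _ _
      have : B * (1 / θ) < 0 := mul_neg_of_pos_of_neg hB0 hs
      rw [max_eq_left]
      apply max_le <;> linarith
    rw [hL, hR, zero_div]
  · rw [← max_div_div_right hpos.le, ← max_div_div_right hpos.le,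
      ← min_div_div_right hpos.le, ← min_div_div_right hpos.le, zero_div,
      mul_div_assoc, div_self hθ, mul_one, mul_div_assoc, div_self hθ, mul_one]
    have e1 : B / θ = B * (1 / θ) := by ring
    have e2 : (2 : ℝ) / θ = 2 * (1 / θ) := by ring
    rw [e1, e2, min_comm (2 * (1/θ)) (B/A), min_comm (B * (1/θ)) 2, max_comm (min (B/A) (2*(1/θ)))]
end

section
/- Let A, B be reals with 0 < B < min(2, 2A), and define the enhanced monotonized-central (MC) limiter φ(θ) = max(0, min(2θ, (B/(A+1))·(θ+1), 2)). Then: (i) φ(A) = B; (ii) φ(θ) = 0 for all θ ≤ 0; (iii) 0 ≤ φ(θ) ≤ 2 for all θ; and (iv) φ(θ) ≤ 2θ for all θ > 0. -/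
/-- The enhanced MC limiter `φ(θ) = max(0, min(2θ, (B/(A+1))(θ+1), 2))` satisfies the
    second-order condition `φ(A) = B` and the TVD conditions. -/
theorem enhanced_mc_properties (A B : ℝ) (hB0 : 0 < B) (hB : B < min 2 (2 * A)) :
    (max 0 (min (2 * A) (min ((B / (A + 1)) * (A + 1)) 2)) = B) ∧
      (∀ θ : ℝ, θ ≤ 0 → max 0 (min (2 * θ) (min ((B / (A + 1)) * (θ + 1)) 2)) = 0) ∧
      (∀ θ : ℝ, 0 ≤ max 0 (min (2 * θ) (min ((B / (A + 1)) * (θ + 1)) 2)) ∧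
        max 0 (min (2 * θ) (min ((B / (A + 1)) * (θ + 1)) 2)) ≤ 2) ∧
      (∀ θ : ℝ, 0 < θ →
        max 0 (min (2 * θ) (min ((B / (A + 1)) * (θ + 1)) 2)) ≤ 2 * θ) := by
  have h2 : B < 2 := lt_of_lt_of_le hB (min_le_left _ _)
  have h2A : B < 2 * A := lt_of_lt_of_le hB (min_le_right _ _)
  have hA1 : A + 1 ≠ 0 := by nlinarith
  refine ⟨?_, ?_, ?_, ?_⟩
  · rw [div_mul_cancel₀ _ hA1]
    rw [min_eq_left h2.le, min_eq_right h2A.le, max_eq_right hB0.le]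
  · intro θ hθ
    apply max_eq_left
    exact le_trans (min_le_left _ _) (by linarith)
  · intro θ
    refine ⟨le_max_left _ _, max_le (by norm_num) ?_⟩
    exact le_trans (min_le_right _ _) (min_le_right _ _)
  · intro θ hθ
    exact max_le (by linarith) (min_le_left _ _)
end

section
/- Let A, B be reals with 0 < B < min(2, 2A), and define φ_{A,B}(θ) = max(0, min(2θ, (B/(A+1))·(θ+1), 2)). Then for every real θ ≠ 0, φ_{A,B}(θ)/θ = φ_{1/A, B/A}(1/θ); i.e., the enhanced MC limiter is symmetry-preserving. -/
/-- The enhanced MC limiter `φ_{A,B}(θ) = max(0, min(2θ, (B/(A+1))(θ+1), 2))` is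
    symmetry-preserving: `φ_{A,B}(θ)/θ = φ_{1/A, B/A}(1/θ)` for all `θ ≠ 0`. -/
theorem enhanced_mc_symmetry (A B : ℝ) (hB0 : 0 < B) (hB : B < min 2 (2 * A)) :
    ∀ θ : ℝ, θ ≠ 0 →
      (max 0 (min (2 * θ) (min ((B / (A + 1)) * (θ + 1)) 2))) / θ =
        max 0 (min (2 * (1 / θ))
          (min (((B / A) / (1 / A + 1)) * (1 / θ + 1)) 2)) := by
  have hA : 0 < A := by
    have := lt_of_lt_of_le hB (min_le_right _ _); linarith
  intro θ hθ
  have hA1 : (0:ℝ) < A + 1 := by linarith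
  have key : ((B / A) / (1 / A + 1)) = B / (A + 1) := by
    rw [div_eq_div_iff (by positivity) hA1.ne']
    field_simp
    ring
  rw [key]
  rcases lt_or_gt_of_ne hθ with hneg | hpos
  · have h1 : min (2*θ) (min ((B/(A+1))*(θ+1)) 2) ≤ 2*θ := min_le_left _ _
    have e1 : max 0 (min (2*θ) (min ((B/(A+1))*(θ+1)) 2)) = 0 :=
      max_eq_left (by nlinarith)
    rw [e1, zero_div]
    have hinv : 1/θ < 0 := one_div_neg.mpr hneg
    have h2 : min (2*(1/θ)) (min ((B/(A+1))*(1/θ+1)) 2) ≤ 2*(1/θ) := min_le_left _ _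
    exact (max_eq_left (by nlinarith)).symm
  · rw [← max_div_div_right hpos.le, ← min_div_div_right hpos.le, ← min_div_div_right hpos.le,
      zero_div]
    have e1 : 2 * θ / θ = 2 := by field_simp
    have e2 : (B/(A+1))*(θ+1)/θ = (B/(A+1))*(1/θ+1) := by
      rw [mul_div_assoc]
      congr 1
      field_simp
      ring
    have e3 : (2:ℝ) / θ = 2 * (1/θ) := by ring
    rw [e1, e2, e3]
    congr 1
    rw [min_left_comm, min_comm 2, min_left_comm]
end

section
/- For all reals A, B with 0 < B < min(2, 2A), there exists a positive integer k such that B ≤ 2·(∑_{j=1}^{k} A^j)/(∑_{j=0}^{k} A^j), i.e. B ≤ 2(A^k + A^{k−1} + ⋯ + A)/(A^k + A^{k−1} + ⋯ + A + 1). -/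
private lemma key_step (A B : ℝ) (hA : 0 < A) (hB0 : 0 < B) (hB2 : B < 2) (k : ℕ)
    (hS : B / (2 - B) ≤ ∑ i ∈ Finset.range k, A ^ (i + 1)) :
    B ≤ 2 * ((∑ j ∈ Finset.Icc 1 k, A ^ j) / (∑ j ∈ Finset.range (k + 1), A ^ j)) := by
  set S := ∑ i ∈ Finset.range k, A ^ (i + 1) with hSdef
  have hIcc : (∑ j ∈ Finset.Icc 1 k, A ^ j) = S := by
    rw [hSdef, show Finset.Icc 1 k = Finset.Ico 1 (k + 1) by rfl,
      Finset.sum_Ico_eq_sum_range]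
    simp [add_comm]
  have hrange : (∑ j ∈ Finset.range (k + 1), A ^ j) = S + 1 := by
    rw [Finset.sum_range_succ']
    simp [hSdef]
  have hSnn : 0 ≤ S := Finset.sum_nonneg fun i _ => by positivity
  have h2B : 0 < 2 - B := by linarith
  have hc : B ≤ S * (2 - B) := by
    rw [div_le_iff₀ h2B] at hS; linarith
  rw [hIcc, hrange, ← mul_div_assoc, le_div_iff₀ (by linarith)]
  nlinarith

/-- For admissible limiter parameters `A, B` (with `0 < B < min 2 (2A)`) there is a
    positive integer `k` with `B ≤ 2(A^k + ⋯ + A)/(A^k + ⋯ + A + 1)`. -/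
theorem vanLeer_power_exists (A B : ℝ) (hB0 : 0 < B) (hB : B < min 2 (2 * A)) :
    ∃ k : ℕ, 1 ≤ k ∧
      B ≤ 2 * ((∑ j ∈ Finset.Icc 1 k, A ^ j) / (∑ j ∈ Finset.range (k + 1), A ^ j)) := by
  have hB2 : B < 2 := lt_of_lt_of_le hB (min_le_left _ _)
  have hBA : B < 2 * A := lt_of_lt_of_le hB (min_le_right _ _)
  have hA : 0 < A := by linarith
  have h2B : 0 < 2 - B := by linarith
  set c := B / (2 - B) with hc
  have hc0 : 0 < c := div_pos hB0 h2B
  rcases le_or_gt 1 A with hA1 | hA1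
  · -- A ≥ 1 : sum ≥ k
    refine ⟨max 1 ⌈c⌉₊, le_max_left _ _, key_step A B hA hB0 hB2 _ ?_⟩
    have h1 : (⌈c⌉₊ : ℝ) ≤ ((max 1 ⌈c⌉₊ : ℕ) : ℝ) := by
      exact_mod_cast Nat.cast_le.mpr (le_max_right _ _)
    have h2 : ((max 1 ⌈c⌉₊ : ℕ) : ℝ) ≤ ∑ i ∈ Finset.range (max 1 ⌈c⌉₊), A ^ (i + 1) := by
      calc ((max 1 ⌈c⌉₊ : ℕ) : ℝ) = ∑ _i ∈ Finset.range (max 1 ⌈c⌉₊), (1 : ℝ) := by simp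
        _ ≤ _ := Finset.sum_le_sum fun i _ => one_le_pow₀ hA1
    exact le_trans (le_trans (Nat.le_ceil c) h1) h2
  · -- A < 1 : geometric sum, A^k small
    have h1A : 0 < 1 - A := by linarith
    have hcA : c < A / (1 - A) := by
      rw [hc, div_lt_div_iff₀ h2B h1A]; nlinarith
    have hcA' : c * (1 - A) < A := (lt_div_iff₀ h1A).mp hcA
    have hε : 0 < (A - c * (1 - A)) / A := div_pos (by linarith) hA
    obtain ⟨n, hn⟩ := exists_pow_lt_of_lt_one hε hA1
    refine ⟨max n 1, le_max_right _ _, key_step A B hA hB0 hB2 _ ?_⟩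
    have hAk : A ^ (max n 1) ≤ A ^ n :=
      pow_le_pow_of_le_one hA.le hA1.le (le_max_left _ _)
    have hkey : A ^ (max n 1) * A < A - c * (1 - A) :=
      (lt_div_iff₀ hA).mp (lt_of_le_of_lt hAk hn)
    have hgeom : ∑ i ∈ Finset.range (max n 1), A ^ (i + 1)
        = A * (1 - A ^ (max n 1)) / (1 - A) := by
      have h : ∑ i ∈ Finset.range (max n 1), A ^ (i + 1)
          = A * ∑ i ∈ Finset.range (max n 1), A ^ i := by
        rw [Finset.mul_sum]; congr 1; ext i; ring
      rw [h, geom_sum_eq (by linarith : A ≠ 1)]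
      have h2 : (A ^ (max n 1) - 1) / (A - 1) = (1 - A ^ (max n 1)) / (1 - A) := by
        rw [div_eq_div_iff (by linarith) (by linarith)]; ring
      rw [h2, mul_div_assoc]
    rw [hgeom, le_div_iff₀ h1A]
    nlinarith [pow_pos hA (max n 1)]
end

section
/- Let A > 0, B > 0 be reals and k ≥ 1 an integer with B ≤ 2·S_k(A)/T_k(A), where S_k(x) = ∑_{j=1}^{k} x^j and T_k(x) = ∑_{j=0}^{k} x^j. Define the enhanced van Leer limiter φ(θ) = B·(S_k(θ)/T_k(θ))·(T_k(A)/S_k(A)) for θ ≥ 0 and φ(θ) = 0 for θ < 0. Then φ(A) = B, and for every θ > 0 one has 0 < φ(θ) < 2·min(1, θ); in particular φ satisfies the TVD conditions 0 ≤ φ(θ) ≤ 2 and φ(θ) ≤ 2θ (θ > 0) and the second-order condition φ(A) = B. -/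
/-- `S k x = x + x² + ⋯ + x^k`. -/
noncomputable def vlS (k : ℕ) (x : ℝ) : ℝ := ∑ j ∈ Finset.Icc 1 k, x ^ j

/-- `T k x = 1 + x + ⋯ + x^k`. -/
noncomputable def vlT (k : ℕ) (x : ℝ) : ℝ := ∑ j ∈ Finset.range (k + 1), x ^ j

lemma vlS_eq (k : ℕ) (x : ℝ) : vlS k x = ∑ i ∈ Finset.range k, x ^ (i + 1) := by
  unfold vlS
  rw [← Finset.Ico_add_one_right_eq_Icc, Finset.sum_Ico_eq_sum_range]
  simp [add_comm]

lemma vlT_eq_one_add (k : ℕ) (x : ℝ) : vlT k x = 1 + vlS k x := by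
  unfold vlT
  rw [Finset.sum_range_succ', vlS_eq]
  ring

lemma vlS_pos {k : ℕ} {x : ℝ} (hk : 1 ≤ k) (hx : 0 < x) : 0 < vlS k x := by
  rw [vlS_eq]
  apply Finset.sum_pos (fun i _ => pow_pos hx _)
  exact Finset.nonempty_range_iff.mpr (by omega)

lemma vlT_pos {k : ℕ} {x : ℝ} (hx : 0 < x) : 0 < vlT k x := by
  apply Finset.sum_pos (fun i _ => pow_pos hx _)
  exact Finset.nonempty_range_iff.mpr (by omega)

lemma vlS_eq_mul {k : ℕ} (hk : 1 ≤ k) (x : ℝ) : vlS k x = x * vlT (k - 1) x := by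
  obtain ⟨m, rfl⟩ : ∃ m, k = m + 1 := ⟨k - 1, by omega⟩
  rw [vlS_eq]
  unfold vlT
  rw [Finset.mul_sum]
  simp [pow_succ, mul_comm]

lemma vlT_lt {k : ℕ} (hk : 1 ≤ k) {x : ℝ} (hx : 0 < x) : vlT (k - 1) x < vlT k x := by
  obtain ⟨m, rfl⟩ : ∃ m, k = m + 1 := ⟨k - 1, by omega⟩
  unfold vlT
  simp only [Nat.add_sub_cancel]
  conv_rhs => rw [Finset.sum_range_succ]
  nlinarith [pow_pos hx (m + 1)]

/-- The enhanced van Leer limiter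
    `φ(θ) = B·(S_k(θ)/T_k(θ))·(T_k(A)/S_k(A))` for `θ ≥ 0` (and `0` for `θ < 0`)
    satisfies the second-order condition `φ(A) = B` and the strict TVD bounds
    `0 < φ(θ) < 2 min(1, θ)` for `θ > 0`. -/
theorem enhanced_vanLeer_properties (A B : ℝ) (k : ℕ) (hA : 0 < A) (hB : 0 < B)
    (hk : 1 ≤ k) (hkB : B ≤ 2 * (vlS k A / vlT k A))
    (φ : ℝ → ℝ)
    (hφ : ∀ θ : ℝ, 0 ≤ θ → φ θ = B * (vlS k θ / vlT k θ) * (vlT k A / vlS k A))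
    (hφneg : ∀ θ : ℝ, θ < 0 → φ θ = 0) :
    φ A = B ∧ ∀ θ : ℝ, 0 < θ → 0 < φ θ ∧ φ θ < 2 * min 1 θ := by
  have hSA := vlS_pos hk hA
  have hTA : (0:ℝ) < vlT k A := vlT_pos hA
  constructor
  · rw [hφ A hA.le]
    field_simp
  · intro θ hθ
    have hSθ := vlS_pos hk hθ
    have hTθ : (0:ℝ) < vlT k θ := vlT_pos hθ
    rw [hφ θ hθ.le]
    constructor
    · positivity
    · -- B * (TA/SA) ≤ 2
      have h1 : B * (vlT k A / vlS k A) ≤ 2 := by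
        rw [← mul_div_assoc, le_div_iff₀ hTA] at hkB
        rw [← mul_div_assoc, div_le_iff₀ hSA]
        linarith
      have h2 : vlS k θ / vlT k θ < min 1 θ := by
        have ha : vlS k θ / vlT k θ < 1 := by
          rw [div_lt_one hTθ, vlT_eq_one_add]; linarith
        have hb : vlS k θ / vlT k θ < θ := by
          rw [div_lt_iff₀ hTθ, vlS_eq_mul hk]
          exact mul_lt_mul_of_pos_left (vlT_lt hk hθ) hθ
        exact lt_min ha hb
      calc B * (vlS k θ / vlT k θ) * (vlT k A / vlS k A)
          = (B * (vlT k A / vlS k A)) * (vlS k θ / vlT k θ) := by ring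
        _ ≤ 2 * (vlS k θ / vlT k θ) := by
            apply mul_le_mul_of_nonneg_right h1 (by positivity)
        _ < 2 * min 1 θ := by linarith
end

section
/- Let A > 0, B > 0 be reals and k ≥ 2 an integer with B·(1 + (k−1)^{k−1}/k^k) ≤ 2·min(A, 1). Define the enhanced van Albada limiter φ(θ) = B·(θ^k + θ)/(θ^k + A). Then φ(A) = B, and for every θ > 0 one has 0 < φ(θ) ≤ 2·min(1, θ); in particular φ satisfies the TVD conditions 0 ≤ φ(θ) ≤ 2 and φ(θ) ≤ 2θ for θ > 0, and the second-order condition φ(A) = B. -/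
/-- AM–GM core lemma: one copy of `c θ^k` and `k−1` copies of `d/(k−1)` dominate `θ`,
    provided `c d^(k-1) ≥ (k-1)^(k-1)/k^k`. -/
lemma enhanced_vanAlbada_amgm (k : ℕ) (hk : 2 ≤ k) (c d θ : ℝ) (hc : 0 < c) (hd : 0 < d)
    (hθ : 0 < θ) (h : ((k : ℝ) - 1) ^ (k - 1) / (k : ℝ) ^ k ≤ c * d ^ (k - 1)) :
    θ ≤ c * θ ^ k + d := by
  have hK2 : (2 : ℝ) ≤ (k : ℝ) := by exact_mod_cast hk
  have hK1 : 0 < (k : ℝ) - 1 := by linarith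
  have hK0 : 0 < (k : ℝ) := by linarith
  have hKm : ((k - 1 : ℕ) : ℝ) = (k : ℝ) - 1 := by
    push_cast [Nat.cast_sub (by omega : 1 ≤ k)]; ring
  set p₁ : ℝ := (k : ℝ) * (c * θ ^ k) with hp₁def
  set p₂ : ℝ := (k : ℝ) * d / ((k : ℝ) - 1) with hp₂def
  have hp₁ : 0 < p₁ := by positivity
  have hp₂ : 0 < p₂ := by positivity
  have hgm := Real.geom_mean_le_arith_mean2_weighted
    (by positivity : (0:ℝ) ≤ 1 / (k:ℝ)) (by positivity : (0:ℝ) ≤ ((k:ℝ) - 1) / (k:ℝ))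
    hp₁.le hp₂.le (by field_simp; ring)
  have harith : (1 / (k:ℝ)) * p₁ + (((k:ℝ) - 1) / (k:ℝ)) * p₂ = c * θ ^ k + d := by
    rw [hp₁def, hp₂def]; field_simp
  rw [harith] at hgm
  refine le_trans ?_ hgm
  -- it suffices to compare k-th powers
  have hGMpos : 0 < p₁ ^ (1 / (k:ℝ)) * p₂ ^ (((k:ℝ) - 1) / (k:ℝ)) := by
    have h1 := Real.rpow_pos_of_pos hp₁ (1 / (k:ℝ))
    have h2 := Real.rpow_pos_of_pos hp₂ (((k:ℝ) - 1) / (k:ℝ))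
    positivity
  have hkne : k ≠ 0 := by omega
  rw [← pow_le_pow_iff_left₀ hθ.le hGMpos.le hkne]
  have hexp : (p₁ ^ (1 / (k:ℝ)) * p₂ ^ (((k:ℝ) - 1) / (k:ℝ))) ^ k = p₁ * p₂ ^ (k - 1) := by
    rw [mul_pow, ← Real.rpow_natCast (p₁ ^ (1 / (k:ℝ))) k,
      ← Real.rpow_natCast (p₂ ^ (((k:ℝ) - 1) / (k:ℝ))) k,
      ← Real.rpow_mul hp₁.le, ← Real.rpow_mul hp₂.le,
      one_div_mul_cancel hK0.ne', Real.rpow_one, div_mul_cancel₀ _ hK0.ne', ← hKm,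
      Real.rpow_natCast]
  rw [hexp]
  have hval : p₁ * p₂ ^ (k - 1)
      = (c * d ^ (k - 1)) * ((k:ℝ) ^ k * θ ^ k / ((k:ℝ) - 1) ^ (k - 1)) := by
    rw [hp₁def, hp₂def, div_pow, mul_pow]
    have hkk : (k : ℝ) * (k : ℝ) ^ (k - 1) = (k : ℝ) ^ k := by
      rw [← pow_succ']; congr 1; omega
    field_simp
    rw [← hkk]
  rw [hval]
  have hfac : 0 ≤ (k:ℝ) ^ k * θ ^ k / ((k:ℝ) - 1) ^ (k - 1) := by positivity
  calc θ ^ k = ((k : ℝ) - 1) ^ (k - 1) / (k : ℝ) ^ k *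
        ((k:ℝ) ^ k * θ ^ k / ((k:ℝ) - 1) ^ (k - 1)) := by field_simp
    _ ≤ (c * d ^ (k - 1)) * ((k:ℝ) ^ k * θ ^ k / ((k:ℝ) - 1) ^ (k - 1)) :=
        mul_le_mul_of_nonneg_right h hfac

/-- The enhanced van Albada limiter `φ(θ) = B(θ^k + θ)/(θ^k + A)`, with `k ≥ 2` chosen so
    that `B(1 + (k-1)^(k-1)/k^k) ≤ 2 min(A,1)`, satisfies the second-order condition
    `φ(A) = B` and the TVD bounds `0 < φ(θ) ≤ 2 min(1, θ)` for `θ > 0`. -/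
theorem enhanced_vanAlbada_properties (A B : ℝ) (k : ℕ) (hA : 0 < A) (hB : 0 < B)
    (hk : 2 ≤ k)
    (hkB : B * (1 + ((k : ℝ) - 1) ^ (k - 1) / (k : ℝ) ^ k) ≤ 2 * min A 1)
    (φ : ℝ → ℝ) (hφ : ∀ θ : ℝ, φ θ = B * (θ ^ k + θ) / (θ ^ k + A)) :
    φ A = B ∧ ∀ θ : ℝ, 0 < θ → 0 < φ θ ∧ φ θ ≤ 2 * min 1 θ := by
  set ε : ℝ := ((k : ℝ) - 1) ^ (k - 1) / (k : ℝ) ^ k with hεdef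
  have hK2 : (2 : ℝ) ≤ (k : ℝ) := by exact_mod_cast hk
  have hK1 : (0:ℝ) < (k : ℝ) - 1 := by linarith
  have hε : 0 < ε := by rw [hεdef]; positivity
  have hmA : 2 * min A 1 ≤ 2 * A := by have := min_le_left A 1; linarith
  have hm1 : 2 * min A 1 ≤ 2 := by have := min_le_right A 1; linarith
  have hB2 : B * (1 + ε) ≤ 2 := le_trans hkB hm1
  have hBA : B * (1 + ε) ≤ 2 * A := le_trans hkB hmA
  have hBlt2 : B < 2 := by nlinarith
  have hBlt2A : B < 2 * A := by nlinarith
  constructor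
  · rw [hφ A]
    have hden : A ^ k + A ≠ 0 := by positivity
    field_simp
  · intro θ hθ
    have hden : 0 < θ ^ k + A := by positivity
    have hnum : 0 < θ ^ k + θ := by positivity
    have hεle1 : ε ≤ (2 - B) / B := by rw [le_div_iff₀ hB]; nlinarith
    have hεle2 : ε ≤ (2 * A - B) / B := by rw [le_div_iff₀ hB]; nlinarith
    -- Bound 1: φ θ ≤ 2
    have hd1 : (1 : ℝ) ≤ 2 * A / B := by rw [le_div_iff₀ hB]; nlinarith
    have hcond1 : ε ≤ ((2 - B) / B) * (2 * A / B) ^ (k - 1) := by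
      calc ε = ε * 1 := (mul_one ε).symm
        _ ≤ ((2 - B) / B) * (2 * A / B) ^ (k - 1) :=
            mul_le_mul hεle1 (one_le_pow₀ hd1) zero_le_one (le_of_lt (div_pos (by linarith) hB))
    have h1 := enhanced_vanAlbada_amgm k hk ((2 - B) / B) (2 * A / B) θ
      (div_pos (by linarith) hB) (by positivity) hθ hcond1
    -- h1 : θ ≤ (2-B)/B * θ^k + 2A/B
    have hbound1 : B * (θ ^ k + θ) ≤ 2 * (θ ^ k + A) := by
      have := mul_le_mul_of_nonneg_left h1 hB.le
      have hexpand : B * ((2 - B) / B * θ ^ k + 2 * A / B) = (2 - B) * θ ^ k + 2 * A := by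
        field_simp
      rw [hexpand] at this
      nlinarith
    -- Bound 2: φ θ ≤ 2θ
    have hd2 : (1 : ℝ) ≤ 2 / B := by rw [le_div_iff₀ hB]; nlinarith
    have hcond2 : ε ≤ ((2 * A - B) / B) * (2 / B) ^ (k - 1) := by
      calc ε = ε * 1 := (mul_one ε).symm
        _ ≤ ((2 * A - B) / B) * (2 / B) ^ (k - 1) :=
            mul_le_mul hεle2 (one_le_pow₀ hd2) zero_le_one (le_of_lt (div_pos (by linarith) hB))
    have h2 := enhanced_vanAlbada_amgm k hk ((2 * A - B) / B) (2 / B) (1 / θ)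
      (div_pos (by linarith) hB) (by positivity) (by positivity) hcond2
    -- h2 : 1/θ ≤ (2A-B)/B * (1/θ)^k + 2/B
    have hbound2 : B * (θ ^ k + θ) ≤ 2 * θ * (θ ^ k + A) := by
      have hinv : (1 / θ : ℝ) ^ k = 1 / θ ^ k := by rw [div_pow, one_pow]
      rw [hinv] at h2
      have hpos : (0:ℝ) ≤ B * (θ ^ k * θ) := by positivity
      have h3 := mul_le_mul_of_nonneg_left h2 hpos
      have hθk : (0:ℝ) < θ ^ k := by positivity
      have e1 : B * (θ ^ k * θ) * (1 / θ) = B * θ ^ k := by field_simp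
      have e2 : B * (θ ^ k * θ) * ((2 * A - B) / B * (1 / θ ^ k) + 2 / B)
          = (2 * A - B) * θ + 2 * (θ ^ k * θ) := by field_simp
      rw [e1, e2] at h3
      linarith
    refine ⟨by rw [hφ θ]; exact div_pos (mul_pos hB hnum) hden, ?_⟩
    rcases le_total (1:ℝ) θ with hcase | hcase
    · rw [min_eq_left hcase, mul_one, hφ θ, div_le_iff₀ hden]
      linarith [hbound1]
    · rw [min_eq_right hcase, hφ θ, div_le_iff₀ hden]
      linarith [hbound2]
end

section
/- Let A > 0 and θ > 0 be reals, B a real, and k ≥ 1 an integer. Then [B·(θ^k + θ)/(θ^k + A)]/θ = (B/A)·((1/θ)^k + 1/θ)/((1/θ)^k + 1/A); i.e., the enhanced van Albada limiter φ_{A,B}(θ) = B(θ^k + θ)/(θ^k + A) satisfies the symmetry-preserving condition φ_{A,B}(θ)/θ = φ_{1/A, B/A}(1/θ). -/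
/-- The enhanced van Albada limiter `φ_{A,B}(θ) = B(θ^k + θ)/(θ^k + A)` satisfies the
    symmetry-preserving condition `φ_{A,B}(θ)/θ = φ_{1/A, B/A}(1/θ)`. -/
theorem enhanced_vanAlbada_symmetry (A θ B : ℝ) (hA : 0 < A) (hθ : 0 < θ)
    (k : ℕ) (hk : 1 ≤ k) :
    (B * (θ ^ k + θ) / (θ ^ k + A)) / θ =
      (B / A) * ((1 / θ) ^ k + 1 / θ) / ((1 / θ) ^ k + 1 / A) := by
  obtain ⟨m, rfl⟩ := Nat.exists_eq_add_of_le hk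
  have h1 : (0:ℝ) < θ ^ (1 + m) + A := by positivity
  have h2 : (0:ℝ) < (1 / θ) ^ (1 + m) + 1 / A := by positivity
  rw [one_div_pow]
  field_simp
  ring
end

section
/- For every p ∈ {−1, 1} and every q ∈ {0, 1}, there exist reals A, B with 0 < A and 0 < B < 2·min(1, A) such that for all reals α > 0 and β > 0, it is NOT the case that both: (a) for all θ > 0, β·θ^q·(2·α·θ^p)/(1 + α·θ^p) ≤ 2·min(1, θ), and (b) β·A^q·(2·α·A^p)/(1 + α·A^p) = B. In other words, the conventional van Leer limiter applied to an alternative smoothness monitor of the form θ^alt = α·θ^p with limited slope σ = φ^{van Leer}(θ^alt)·β·θ^q·(u_{i+1} − u_i)/Δx_i cannot satisfy both the TVD stability condition and the second-order condition for arbitrary non-uniform grids. -/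
/-- The conventional van Leer limiter applied to an alternative smoothness monitor
    `θ^alt = α θ^p` (with limited slope weight `β θ^q`) cannot satisfy both the TVD
    stability condition and the second-order condition for arbitrary non-uniform grids:
    for each `p ∈ {-1, 1}` and `q ∈ {0, 1}`, there are admissible grid parameters
    `A, B` for which no positive `α, β` make both conditions hold. -/
theorem vanLeer_alternative_monitor_fails (p : ℤ) (hp : p = -1 ∨ p = 1)
    (q : ℕ) (hq : q = 0 ∨ q = 1) :
    ∃ A B : ℝ, 0 < A ∧ 0 < B ∧ B < 2 * min 1 A ∧
      ∀ α β : ℝ, 0 < α → 0 < β →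
        ¬ ((∀ θ : ℝ, 0 < θ →
              β * θ ^ q * (2 * α * θ ^ p / (1 + α * θ ^ p)) ≤ 2 * min 1 θ) ∧
            β * A ^ q * (2 * α * A ^ p / (1 + α * A ^ p)) = B) := by
  rcases hp with rfl | rfl <;> rcases hq with rfl | rfl
  · -- p = -1, q = 0 : TVD always fails for small θ
    refine ⟨1, 1, one_pos, one_pos, by norm_num, ?_⟩
    rintro α β hα hβ ⟨hTVD, -⟩
    have h1α : (0:ℝ) < 1 + α := by linarith
    have hc : 0 < α * β / (1 + α) := by positivity
    set m : ℝ := min 1 (α * β / (1 + α)) with hm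
    have hm0 : 0 < m := lt_min one_pos hc
    have hm1 : m ≤ 1 := min_le_left _ _
    have hmc : m ≤ α * β / (1 + α) := min_le_right _ _
    set θ : ℝ := m / 2 with hθ
    have hθ0 : 0 < θ := by positivity
    have hθ1 : θ < 1 := by simp only [hθ]; linarith
    have hmin : min 1 θ = θ := min_eq_right hθ1.le
    have hne : θ ≠ 0 := hθ0.ne'
    have hdpos : (0:ℝ) < 1 + α * θ⁻¹ := by positivity
    have hda : (0:ℝ) < θ + α := by linarith
    have hT := hTVD θ hθ0
    rw [hmin] at hT
    have hX : β * θ ^ (0:ℕ) * (2 * α * θ ^ (-1:ℤ) / (1 + α * θ ^ (-1:ℤ)))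
        = 2 * α * β / (θ + α) := by
      simp only [pow_zero, one_mul, zpow_neg, zpow_one]
      rw [eq_div_iff hda.ne']
      field_simp
    rw [hX, div_le_iff₀ hda] at hT
    -- hT : 2 α β ≤ 2 θ (θ + α)
    have hmub : m * (1 + α) ≤ α * β := by
      calc m * (1 + α) ≤ α * β / (1 + α) * (1 + α) := by nlinarith
        _ = α * β := by field_simp
    nlinarith [mul_pos hα hβ, hT]
  · -- p = -1, q = 1 : A = 1, B = 3/2
    refine ⟨1, 3/2, one_pos, by norm_num, by norm_num, ?_⟩
    rintro α β hα hβ ⟨hTVD, hord⟩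
    have h1α : (0:ℝ) < 1 + α := by linarith
    have hord' : 4 * (α * β) = 3 * (1 + α) := by
      simp only [pow_one, one_mul, mul_one] at hord
      norm_num at hord
      field_simp at hord
      linarith
    rcases le_or_gt (α * β) 1 with hab | hab
    · -- then α ≤ 1/3, β > 1, violate at small θ
      have hα3 : α ≤ 1/3 := by nlinarith
      have hβ1 : 1 < β := by nlinarith
      set m : ℝ := min 1 (α * (β - 1)) with hm
      have hm0 : 0 < m := lt_min one_pos (by nlinarith)
      have hm1 : m ≤ 1 := min_le_left _ _
      have hmc : m ≤ α * (β - 1) := min_le_right _ _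
      set θ : ℝ := m / 2 with hθ
      have hθ0 : 0 < θ := by positivity
      have hθ1 : θ < 1 := by simp only [hθ]; linarith
      have hmin : min 1 θ = θ := min_eq_right hθ1.le
      have hne : θ ≠ 0 := hθ0.ne'
      have hdpos : (0:ℝ) < 1 + α * θ⁻¹ := by positivity
      have hda : (0:ℝ) < θ + α := by linarith
      have hT := hTVD θ hθ0
      rw [hmin] at hT
      have hX : β * θ ^ (1:ℕ) * (2 * α * θ ^ (-1:ℤ) / (1 + α * θ ^ (-1:ℤ)))
          = 2 * α * β * θ / (θ + α) := by
        simp only [pow_one, zpow_neg, zpow_one]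
        rw [eq_div_iff hda.ne']
        field_simp
      rw [hX, div_le_iff₀ hda] at hT
      -- hT : 2 α β θ ≤ 2 θ (θ + α);  θ > 0 ⇒ α β ≤ θ + α ; but θ < α(β-1)
      nlinarith [hT, hθ0, hmc, hm0]
    · -- α β > 1 : violate at large θ
      set θ : ℝ := max 1 (α / (α * β - 1)) + 1 with hθ
      have hθ1 : 1 < θ := by
        have := le_max_left 1 (α / (α * β - 1)); simp only [hθ]; linarith
      have hθ0 : 0 < θ := by linarith
      have hθbig : α / (α * β - 1) < θ := by
        have := le_max_right 1 (α / (α * β - 1)); simp only [hθ]; linarith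
      have hθab : α < θ * (α * β - 1) := by
        rw [div_lt_iff₀ (by linarith : (0:ℝ) < α * β - 1)] at hθbig
        linarith
      have hmin : min 1 θ = 1 := min_eq_left hθ1.le
      have hne : θ ≠ 0 := hθ0.ne'
      have hdpos : (0:ℝ) < 1 + α * θ⁻¹ := by positivity
      have hda : (0:ℝ) < θ + α := by linarith
      have hT := hTVD θ hθ0
      rw [hmin] at hT
      have hX : β * θ ^ (1:ℕ) * (2 * α * θ ^ (-1:ℤ) / (1 + α * θ ^ (-1:ℤ)))
          = 2 * α * β * θ / (θ + α) := by
        simp only [pow_one, zpow_neg, zpow_one]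
        rw [eq_div_iff hda.ne']
        field_simp
      rw [hX, div_le_iff₀ hda] at hT
      -- hT : 2 α β θ ≤ 2 * 1 * (θ + α), but θ(αβ - 1) > α
      nlinarith [hT, hθab]
  · -- p = 1, q = 0 : A = 1, B = 3/2
    refine ⟨1, 3/2, one_pos, by norm_num, by norm_num, ?_⟩
    rintro α β hα hβ ⟨hTVD, hord⟩
    have h1α : (0:ℝ) < 1 + α := by linarith
    have hord' : 4 * (α * β) = 3 * (1 + α) := by
      simp only [pow_zero, one_mul] at hord
      norm_num at hord
      field_simp at hord
      linarith
    rcases le_or_gt β 1 with hβ1 | hβ1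
    · -- β ≤ 1 : α ≥ 3, violate at θ = 1/4
      have hα3 : 3 ≤ α := by nlinarith
      have hT := hTVD (1/4) (by norm_num)
      have hmin : min (1:ℝ) (1/4) = 1/4 := by norm_num
      rw [hmin] at hT
      have hdpos : (0:ℝ) < 1 + α * (1/4) := by positivity
      have hX : β * ((1:ℝ)/4) ^ (0:ℕ) * (2 * α * ((1:ℝ)/4) ^ (1:ℤ) / (1 + α * ((1:ℝ)/4) ^ (1:ℤ)))
          = (α * β / 2) / (1 + α * (1/4)) := by
        norm_num
        ring
      rw [hX, div_le_iff₀ hdpos] at hT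
      -- hT : αβ/2 ≤ (1/2)(1 + α/4) ⇒ 4αβ ≤ 4 + α; with 4αβ = 3+3α ⇒ 2α ≤ 1
      nlinarith [hT, hord', hα3]
    · -- β > 1 : violate at large θ
      set θ : ℝ := max 1 (1 / (α * (β - 1))) + 1 with hθ
      have hθ1 : 1 < θ := by
        have := le_max_left 1 (1 / (α * (β - 1))); simp only [hθ]; linarith
      have hθ0 : 0 < θ := by linarith
      have hθbig : 1 / (α * (β - 1)) < θ := by
        have := le_max_right 1 (1 / (α * (β - 1))); simp only [hθ]; linarith
      have hθab : 1 < θ * (α * (β - 1)) := by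
        rw [div_lt_iff₀ (by nlinarith : (0:ℝ) < α * (β - 1))] at hθbig
        linarith
      have hmin : min 1 θ = 1 := min_eq_left hθ1.le
      have hdpos : (0:ℝ) < 1 + α * θ := by positivity
      have hT := hTVD θ hθ0
      rw [hmin] at hT
      have hX : β * θ ^ (0:ℕ) * (2 * α * θ ^ (1:ℤ) / (1 + α * θ ^ (1:ℤ)))
          = 2 * α * β * θ / (1 + α * θ) := by
        simp only [pow_zero, one_mul, zpow_one]
        rw [eq_div_iff hdpos.ne']
        field_simp
      rw [hX, div_le_iff₀ hdpos] at hT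
      -- hT : 2αβθ ≤ 2(1 + αθ), but αθ(β-1) > 1
      nlinarith [hT, hθab]
  · -- p = 1, q = 1 : TVD always fails at large θ
    refine ⟨1, 1, one_pos, one_pos, by norm_num, ?_⟩
    rintro α β hα hβ ⟨hTVD, -⟩
    set θ : ℝ := max (max 1 (3 / β)) (1 / α) with hθ
    have hθ1 : 1 ≤ θ := le_trans (le_max_left 1 (3/β)) (le_max_left _ _)
    have hθ0 : 0 < θ := by linarith
    have hθβ : 3 / β ≤ θ := le_trans (le_max_right 1 (3/β)) (le_max_left _ _)
    have hθα : 1 / α ≤ θ := le_max_right _ _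
    have hβθ : 3 ≤ β * θ := by
      rw [div_le_iff₀ hβ] at hθβ; linarith
    have hαθ : 1 ≤ α * θ := by
      rw [div_le_iff₀ hα] at hθα; linarith
    have hmin : min 1 θ = 1 := min_eq_left hθ1
    have hdpos : (0:ℝ) < 1 + α * θ := by positivity
    have hT := hTVD θ hθ0
    rw [hmin] at hT
    have hX : β * θ ^ (1:ℕ) * (2 * α * θ ^ (1:ℤ) / (1 + α * θ ^ (1:ℤ)))
        = 2 * α * β * θ ^ 2 / (1 + α * θ) := by
      simp only [pow_one, zpow_one]
      rw [eq_div_iff hdpos.ne']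
      field_simp
    rw [hX, div_le_iff₀ hdpos] at hT
    -- hT : 2αβθ² ≤ 2(1 + αθ); but (βθ)(αθ) ≥ 3αθ ≥ 1 + 2αθ > 1 + αθ
    nlinarith [hT, hβθ, hαθ, mul_pos hα hθ0]
end
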